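/- The counterfactual probability P̃(s̃' | s̃, ã) = (∑_u 1[f(s̃,ã,u)=s̃'] · 1[f(s_t,a_t,u)=s_{t+1}] · θ(u)) / P(s_{t+1}|s_t,a_t) is at least max(0, (P(s̃'|s̃,ã) − (1 − P(s_{t+1}|s_t,a_t))) / P(s_{t+1}|s_t,a_t)), whenever θ is consistent with the interventional distribution P. -/
import Mathlib


theorem cf_prob_lower_bound {S A U : Type*} [Fintype S] [Fintype A] [Fintype U]
    [DecidableEq S]
    (f : S → A → U → S) (θ : U → ℝ)
    (hθ0 : ∀ u, 0 ≤ θ u) (hθsum : ∑ u, θ u = 1)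
    (P : S → S → A → ℝ)
    (hcons : ∀ s a s', ∑ u ∈ Finset.univ.filter (fun u => f s a u = s'), θ u = P s' s a)
    (st st1 sc sc' : S) (a_t ac : A)
    (hpos : 0 < P st1 st a_t) :
    max 0 ((P sc' sc ac - (1 - P st1 st a_t)) / P st1 st a_t)
      ≤ (∑ u ∈ Finset.univ.filter (fun u => f sc ac u = sc' ∧ f st a_t u = st1), θ u)
          / P st1 st a_t := by
  classical
  set B := Finset.univ.filter (fun u => f sc ac u = sc')
  set C := Finset.univ.filter (fun u => f st a_t u = st1)
  have hinter : Finset.univ.filter (fun u => f sc ac u = sc' ∧ f st a_t u = st1)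
      = B ∩ C := by
    ext u; simp [B, C, Finset.mem_filter]
  rw [hinter]
  have hN0 : 0 ≤ ∑ u ∈ B ∩ C, θ u := Finset.sum_nonneg fun u _ => hθ0 u
  rw [max_le_iff]
  constructor
  · positivity
  · rw [div_le_div_iff_of_pos_right hpos]
    have hunion : ∑ u ∈ B ∪ C, θ u + ∑ u ∈ B ∩ C, θ u
        = ∑ u ∈ B, θ u + ∑ u ∈ C, θ u := Finset.sum_union_inter
    have hub : ∑ u ∈ B ∪ C, θ u ≤ 1 := by
      rw [← hθsum]
      exact Finset.sum_le_sum_of_subset_of_nonneg (Finset.subset_univ _)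
        (fun u _ _ => hθ0 u)
    have hB : ∑ u ∈ B, θ u = P sc' sc ac := hcons sc ac sc'
    have hC : ∑ u ∈ C, θ u = P st1 st a_t := hcons st a_t st1
    linarith
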